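/- For every positive integer n, as an identity of rational functions in q: ∑ over partitions (1^{m_1},…,n^{m_n}) of n of ∏_{i=1}^n 1/(m_i!·(i(q^i−1))^{m_i}) equals q^{n(n−1)/2} / ∏_{i=1}^n (q^i − 1). -/

import Mathlib

open Finset RatFunc

lemma keyA {K : Type*} [Field K] (u : K) :
    ∀ n : ℕ, (∀ j : ℕ, 1 ≤ j → j ≤ n → (1 : K) - u ^ j ≠ 0) →
    ∑ i ∈ Ioc 0 n, (∏ j ∈ Ioc (n - i) n, (1 - u ^ j)) / (1 - u ^ i) = n := by
  intro n
  induction n with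
  | zero => simp
  | succ n ih =>
    intro h
    have h' : ∀ j : ℕ, 1 ≤ j → j ≤ n → (1 : K) - u ^ j ≠ 0 :=
      fun j h1 h2 => h j h1 (h2.trans (Nat.le_succ n))
    set e : ℕ → K := fun j => 1 - u ^ j with he
    rw [Finset.sum_Ioc_succ_top (Nat.zero_le _)]
    have htop : (∏ j ∈ Ioc (n + 1 - (n+1)) (n+1), e j) / e (n+1)
        = ∏ j ∈ Ioc 0 n, e j := by
      rw [Nat.sub_self, Finset.prod_Ioc_succ_top (Nat.zero_le _)]
      rw [mul_div_assoc, div_self (h (n+1) (by omega) le_rfl), mul_one]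
    rw [htop]
    have hterm : ∀ i ∈ Ioc 0 n,
        (∏ j ∈ Ioc (n + 1 - i) (n+1), e j) / e i
        = (∏ j ∈ Ioc (n + 1 - i) n, e j)
          + (∏ j ∈ Ioc (n - i) n, e j) / e i - (∏ j ∈ Ioc (n - i) n, e j) := by
      intro i hi
      rw [Finset.mem_Ioc] at hi
      have hi1 : 1 ≤ i := hi.1
      have hin : i ≤ n := hi.2
      have hsplit : (∏ j ∈ Ioc (n + 1 - i) (n+1), e j)
          = e (n+1) * ∏ j ∈ Ioc (n + 1 - i) n, e j := by
        rw [Finset.prod_Ioc_succ_top (by omega), mul_comm]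
      have hpeel : (∏ j ∈ Ioc (n - i) n, e j)
          = e (n + 1 - i) * ∏ j ∈ Ioc (n + 1 - i) n, e j := by
        rw [← Finset.prod_Ioc_consecutive _ (show n - i ≤ n + 1 - i by omega) (by omega)]
        congr 1
        rw [show n + 1 - i = (n - i) + 1 by omega, Nat.Ioc_succ_singleton,
          Finset.prod_singleton]
      have hkey : e (n+1) = e i + u ^ i * e (n + 1 - i) := by
        simp only [he]
        rw [mul_sub, mul_one, ← pow_add, show i + (n + 1 - i) = n + 1 by omega]
        ring
      have hui : u ^ i = 1 - e i := by simp [he]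
      have hei : e i ≠ 0 := h' i hi1 hin
      rw [hsplit, hkey, hpeel]
      field_simp
      ring
    rw [Finset.sum_congr rfl hterm]
    have ihn := ih h'
    simp only [sum_add_distrib, sum_sub_distrib]
    rw [show (∑ i ∈ Ioc 0 n, (∏ j ∈ Ioc (n - i) n, e j) / e i) = (n : K) from ihn]
    have hIoc : Ioc 0 n = Ico 1 (n+1) := by
      rw [← Finset.Icc_add_one_left_eq_Ioc, Finset.Ico_add_one_right_eq_Icc]
      rfl
    have hQ : ∑ i ∈ Ioc 0 n, (∏ j ∈ Ioc (n + 1 - i) n, e j)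
        = ∑ i ∈ range n, (∏ j ∈ Ioc (n - i) n, e j) := by
      rw [hIoc, Finset.sum_Ico_eq_sum_range]
      apply Finset.sum_congr (by simp) (fun i _ => by rw [show n + 1 - (1 + i) = n - i by omega])
    have hP : ∑ i ∈ Ioc 0 n, (∏ j ∈ Ioc (n - i) n, e j)
        = ∑ i ∈ range n, (∏ j ∈ Ioc (n - (i+1)) n, e j) := by
      rw [hIoc, Finset.sum_Ico_eq_sum_range]
      apply Finset.sum_congr (by simp) (fun i _ => by rw [show n - (1 + i) = n - (i + 1) by omega])
    have h3 := Finset.sum_range_sub (fun i => ∏ j ∈ Ioc (n - i) n, e j) n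
    simp only [Nat.sub_self, Nat.sub_zero, Finset.Ioc_self, Finset.prod_empty] at h3
    rw [Finset.sum_sub_distrib] at h3
    rw [hQ, hP]
    push_cast
    linear_combination -h3

noncomputable abbrev K := RatFunc ℚ

instance : CharZero K := charZero_of_injective_algebraMap (RatFunc.algebraMap_injective ℚ)

lemma Xpow_sub_one_ne {i : ℕ} (hi : 1 ≤ i) : (X : K) ^ i - 1 ≠ 0 := by
  have : ((Polynomial.X : Polynomial ℚ) ^ i - 1) ≠ 0 := by
    intro hcon
    have := congrArg (Polynomial.eval 0) hcon
    simp [Polynomial.eval_pow, zero_pow (by omega : i ≠ 0)] at this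
  have h2 := RatFunc.algebraMap_ne_zero (K := ℚ) this
  rwa [map_sub, map_pow, map_one, RatFunc.algebraMap_X] at h2

/-- the summand -/
noncomputable def F (j m : ℕ) : K :=
  1 / ((m.factorial : K) * ((j : K) * ((X : K) ^ j - 1)) ^ m)

noncomputable def L (n : ℕ) : K :=
  ∑ P : n.Partition, ∏ i ∈ Icc 1 n, F i (P.parts.count i)

lemma F_zero (j : ℕ) : F j 0 = 1 := by simp [F]

lemma part_le {m : ℕ} (Q : m.Partition) {j : ℕ} (hj : j ∈ Q.parts) : j ≤ m := by
  rw [← Q.parts_sum]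
  exact Multiset.le_sum_of_mem hj

lemma count_eq_zero_of_gt {m : ℕ} (Q : m.Partition) {j : ℕ} (hj : m < j) :
    Q.parts.count j = 0 := by
  rw [Multiset.count_eq_zero]
  exact fun hmem => absurd (part_le Q hmem) (by omega)

lemma prod_ext {m N : ℕ} (hmN : m ≤ N) (Q : m.Partition) :
    ∏ j ∈ Icc 1 N, F j (Q.parts.count j) = ∏ j ∈ Icc 1 m, F j (Q.parts.count j) := by
  symm
  apply Finset.prod_subset (Finset.Icc_subset_Icc_right hmN)
  intro j hjN hjm
  rw [mem_Icc] at hjN hjm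
  rw [count_eq_zero_of_gt Q (by omega), F_zero]

lemma sum_counts {n : ℕ} (P : n.Partition) :
    ∑ i ∈ Icc 1 n, P.parts.count i * i = n := by
  conv_rhs => rw [← P.parts_sum]
  rw [Finset.sum_multiset_count]
  symm
  apply Finset.sum_subset
  · intro j hj
    rw [Multiset.mem_toFinset] at hj
    rw [mem_Icc]
    exact ⟨P.parts_pos hj, part_le P hj⟩
  · intro j _ hj
    rw [Multiset.mem_toFinset] at hj
    rw [Multiset.count_eq_zero_of_notMem hj, zero_smul]


def erasePart {n i : ℕ} (hin : i ≤ n) (P : n.Partition) (hP : i ∈ P.parts) :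
    (n - i).Partition where
  parts := P.parts.erase i
  parts_pos := fun hj => P.parts_pos (Multiset.mem_of_mem_erase hj)
  parts_sum := by
    have h1 : P.parts = i ::ₘ P.parts.erase i := (Multiset.cons_erase hP).symm
    have h2 := P.parts_sum
    rw [h1, Multiset.sum_cons] at h2
    omega

def consPart {n i : ℕ} (hi1 : 1 ≤ i) (hin : i ≤ n) (Q : (n - i).Partition) :
    n.Partition where
  parts := i ::ₘ Q.parts
  parts_pos := fun hj => by
    rcases Multiset.mem_cons.mp hj with h | h
    · omega
    · exact Q.parts_pos h
  parts_sum := by rw [Multiset.sum_cons, Q.parts_sum]; omega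

lemma value_eq {n i : ℕ} (hi1 : 1 ≤ i) (hin : i ≤ n) (P : n.Partition)
    (hP : i ∈ P.parts) :
    ((P.parts.count i * i : ℕ) : K) * ∏ j ∈ Icc 1 n, F j (P.parts.count j)
      = ((X : K) ^ i - 1)⁻¹ * ∏ j ∈ Icc 1 n, F j ((P.parts.erase i).count j) := by
  have hi_mem : i ∈ Icc 1 n := mem_Icc.mpr ⟨hi1, hin⟩
  rw [← Finset.mul_prod_erase _ (fun j => F j (P.parts.count j)) hi_mem,
      ← Finset.mul_prod_erase _ (fun j => F j ((P.parts.erase i).count j)) hi_mem]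
  have hprods : ∏ j ∈ (Icc 1 n).erase i, F j ((P.parts.erase i).count j)
      = ∏ j ∈ (Icc 1 n).erase i, F j (P.parts.count j) := by
    apply Finset.prod_congr rfl
    intro j hj
    rw [Multiset.count_erase_of_ne (Finset.ne_of_mem_erase hj)]
  rw [hprods, ← mul_assoc, ← mul_assoc]
  congr 1
  -- single-factor identity
  have hcnt : (P.parts.erase i).count i = P.parts.count i - 1 :=
    Multiset.count_erase_self i P.parts
  obtain ⟨k, hk⟩ : ∃ k, P.parts.count i = k + 1 := by
    have := Multiset.count_pos.mpr hP
    exact ⟨P.parts.count i - 1, by omega⟩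
  rw [hcnt, hk]
  simp only [F, Nat.add_sub_cancel]
  have hX : ((X : K) ^ i - 1) ≠ 0 := Xpow_sub_one_ne hi1
  have hc : ((i : K) * ((X : K) ^ i - 1)) ≠ 0 :=
    mul_ne_zero (Nat.cast_ne_zero.mpr (by omega)) hX
  have hcpow : ((i : K) * ((X : K) ^ i - 1)) ^ k ≠ 0 := pow_ne_zero _ hc
  have hfk : ((k.factorial : K)) ≠ 0 := Nat.cast_ne_zero.mpr k.factorial_ne_zero
  have hk1 : ((k : K) + 1) ≠ 0 := by
    have : ((k + 1 : ℕ) : K) ≠ 0 := Nat.cast_ne_zero.mpr (by omega)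
    push_cast at this; exact this
  rw [Nat.factorial_succ, pow_succ]
  push_cast
  have hi0 : (i : K) ≠ 0 := Nat.cast_ne_zero.mpr (by omega)
  field_simp

lemma sum_over_i {n i : ℕ} (hi1 : 1 ≤ i) (hin : i ≤ n) :
    ∑ P : n.Partition, ((P.parts.count i * i : ℕ) : K) * ∏ j ∈ Icc 1 n, F j (P.parts.count j)
      = ((X : K) ^ i - 1)⁻¹ * L (n - i) := by
  rw [L, Finset.mul_sum]
  have hR : ∀ Q : (n - i).Partition,
      ((X : K) ^ i - 1)⁻¹ * ∏ j ∈ Icc 1 (n - i), F j (Q.parts.count j)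
      = ((X : K) ^ i - 1)⁻¹ * ∏ j ∈ Icc 1 n, F j (Q.parts.count j) := by
    intro Q
    rw [prod_ext (Nat.sub_le n i) Q]
  rw [Finset.sum_congr rfl (fun Q _ => hR Q)]
  rw [← Finset.sum_filter_of_ne (p := fun P : n.Partition => i ∈ P.parts)
    (fun P _ hne => by
      by_contra hmem
      apply hne
      rw [Multiset.count_eq_zero_of_notMem hmem]
      simp)]
  refine Finset.sum_bij'
    (fun P hP => erasePart hin P (by simpa using (Finset.mem_filter.mp hP).2))
    (fun Q _ => consPart hi1 hin Q) (fun P hP => Finset.mem_univ _)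
    (fun Q hQ => Finset.mem_filter.mpr ⟨Finset.mem_univ _, Multiset.mem_cons_self i Q.parts⟩)
    (fun P hP => ?_) (fun Q hQ => ?_) (fun P hP => ?_)
  · have hmem : i ∈ P.parts := by simpa using (Finset.mem_filter.mp hP).2
    apply Nat.Partition.ext
    show i ::ₘ P.parts.erase i = P.parts
    exact Multiset.cons_erase hmem
  · apply Nat.Partition.ext
    show (i ::ₘ Q.parts).erase i = Q.parts
    exact Multiset.erase_cons_head i Q.parts
  · exact value_eq hi1 hin P (by simpa using (Finset.mem_filter.mp hP).2)

lemma L_rec {n : ℕ} (hn : 0 < n) :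
    (n : K) * L n = ∑ i ∈ Icc 1 n, ((X : K) ^ i - 1)⁻¹ * L (n - i) := by
  rw [L, Finset.mul_sum]
  have step1 : ∀ P : n.Partition,
      (n : K) * ∏ j ∈ Icc 1 n, F j (P.parts.count j)
      = ∑ i ∈ Icc 1 n, ((P.parts.count i * i : ℕ) : K) * ∏ j ∈ Icc 1 n, F j (P.parts.count j) := by
    intro P
    rw [← Finset.sum_mul]
    congr 1
    rw [← Nat.cast_sum, sum_counts P]
  rw [Finset.sum_congr rfl (fun P _ => step1 P), Finset.sum_comm]
  exact Finset.sum_congr rfl (fun i hi =>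
    sum_over_i (mem_Icc.mp hi).1 (mem_Icc.mp hi).2)

noncomputable def Rf (m : ℕ) : K :=
  (X : K) ^ (m * (m - 1) / 2) / ∏ i ∈ Icc 1 m, ((X : K) ^ i - 1)

noncomputable def zz : K := (X : K)⁻¹

lemma hXz (j : ℕ) : (X : K) ^ j * zz ^ j = 1 := by
  rw [zz, ← mul_pow, mul_inv_cancel₀ RatFunc.X_ne_zero, one_pow]

lemma one_sub_zz_ne {j : ℕ} (hj : 1 ≤ j) : (1 : K) - zz ^ j ≠ 0 := by
  intro h
  apply Xpow_sub_one_ne hj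
  have h1 : zz ^ j = 1 := by linear_combination -h
  have h2 := hXz j
  rw [h1, mul_one] at h2
  rw [h2, sub_self]

lemma prod_zz_ne (m : ℕ) : ∏ j ∈ Icc 1 m, ((1 : K) - zz ^ j) ≠ 0 := by
  rw [Finset.prod_ne_zero_iff]
  exact fun j hj => one_sub_zz_ne (mem_Icc.mp hj).1

lemma sum_Icc_id (m : ℕ) : ∑ j ∈ Icc 1 m, j = m * (m - 1) / 2 + m := by
  have h1 : Icc 1 m = Ico 1 (m + 1) := by rw [Finset.Ico_add_one_right_eq_Icc]
  rw [h1, Finset.sum_Ico_eq_sum_range]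
  simp only [Nat.add_sub_cancel]
  have h2 := Finset.sum_range_id_mul_two m
  rw [Finset.sum_add_distrib, Finset.sum_const, Finset.card_range, smul_eq_mul, mul_one]
  omega

lemma Rf_eq (m : ℕ) : Rf m = zz ^ m * (∏ j ∈ Icc 1 m, ((1 : K) - zz ^ j))⁻¹ := by
  have hden : ∏ j ∈ Icc 1 m, ((X : K) ^ j - 1)
      = (X : K) ^ (∑ j ∈ Icc 1 m, j) * ∏ j ∈ Icc 1 m, ((1 : K) - zz ^ j) := by
    rw [← Finset.prod_pow_eq_pow_sum, ← Finset.prod_mul_distrib]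
    apply Finset.prod_congr rfl
    intro j _
    rw [mul_sub, mul_one, hXz j]
  rw [Rf, hden, sum_Icc_id m, pow_add]
  have h1 : ((X : K) ^ (m * (m - 1) / 2)) ≠ 0 := pow_ne_zero _ RatFunc.X_ne_zero
  have h2 : ((X : K) ^ m) ≠ 0 := pow_ne_zero _ RatFunc.X_ne_zero
  have h3 := prod_zz_ne m
  have h4 : zz ^ m = ((X : K) ^ m)⁻¹ := by rw [zz, inv_pow]
  rw [h4]
  field_simp

lemma key2 (n : ℕ) :
    ∑ i ∈ Icc 1 n, (((1 : K) - zz ^ i) * ∏ j ∈ Icc 1 (n - i), ((1 : K) - zz ^ j))⁻¹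
      = (n : K) * (∏ j ∈ Icc 1 n, ((1 : K) - zz ^ j))⁻¹ := by
  have hIcc : ∀ m : ℕ, Ioc 0 m = Icc 1 m := fun m => (Finset.Icc_add_one_left_eq_Ioc 0 m).symm
  have hA := keyA zz n (fun j h1 h2 => one_sub_zz_ne h1)
  rw [hIcc] at hA
  rw [mul_comm, ← hA, Finset.mul_sum]
  apply Finset.sum_congr rfl
  intro i hi
  rw [mem_Icc] at hi
  have hsplit : ∏ j ∈ Icc 1 n, ((1 : K) - zz ^ j)
      = (∏ j ∈ Icc 1 (n - i), ((1 : K) - zz ^ j)) * ∏ j ∈ Ioc (n - i) n, ((1 : K) - zz ^ j) := by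
    rw [← hIcc, ← hIcc, Finset.prod_Ioc_consecutive _ (Nat.zero_le _) (Nat.sub_le n i)]
  have h1 : ((1 : K) - zz ^ i) ≠ 0 := one_sub_zz_ne hi.1
  have h2 := prod_zz_ne (n - i)
  have h3 : ∏ j ∈ Ioc (n - i) n, ((1 : K) - zz ^ j) ≠ 0 := by
    rw [Finset.prod_ne_zero_iff]
    intro j hj
    rw [Finset.mem_Ioc] at hj
    exact one_sub_zz_ne (by omega)
  rw [hsplit]
  field_simp

lemma Rf_rec {n : ℕ} (hn : 0 < n) :
    (n : K) * Rf n = ∑ i ∈ Icc 1 n, ((X : K) ^ i - 1)⁻¹ * Rf (n - i) := by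
  have hterm : ∀ i ∈ Icc 1 n,
      ((X : K) ^ i - 1)⁻¹ * Rf (n - i)
      = zz ^ n * (((1 : K) - zz ^ i) * ∏ j ∈ Icc 1 (n - i), ((1 : K) - zz ^ j))⁻¹ := by
    intro i hi
    rw [mem_Icc] at hi
    rw [Rf_eq]
    have hXi : ((X : K) ^ i - 1) = (X : K) ^ i * (1 - zz ^ i) := by
      rw [mul_sub, mul_one, hXz i]
    rw [hXi]
    have h1 : ((X : K) ^ i) ≠ 0 := pow_ne_zero _ RatFunc.X_ne_zero
    have h2 : ((1 : K) - zz ^ i) ≠ 0 := one_sub_zz_ne hi.1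
    have h3 := prod_zz_ne (n - i)
    have hzn : zz ^ (n - i) * ((X : K) ^ i)⁻¹ = zz ^ n := by
      rw [zz, ← inv_pow, ← pow_add]
      congr 1
      omega
    rw [mul_inv, mul_inv, ← hzn]
    ring
  rw [Finset.sum_congr rfl hterm, ← Finset.mul_sum, key2 n, Rf_eq]
  ring

instance : Unique (Nat.Partition 0) where
  default := ⟨0, by simp, by simp⟩
  uniq := fun P => by
    have h0 : P.parts = 0 := by
      rw [Multiset.eq_zero_iff_forall_notMem]
      intro x hx
      have h1 := P.parts_pos hx
      have h2 := part_le P hx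
      omega
    apply Nat.Partition.ext
    exact h0

lemma L_zero : L 0 = 1 := by
  rw [L]
  simp

lemma Rf_zero : Rf 0 = 1 := by
  rw [Rf]
  simp

lemma L_eq_Rf (n : ℕ) : L n = Rf n := by
  induction n using Nat.strong_induction_on with
  | _ n ih =>
    rcases Nat.eq_zero_or_pos n with h0 | hpos
    · subst h0; rw [L_zero, Rf_zero]
    · have hL := L_rec hpos
      have hR := Rf_rec hpos
      have hsum : ∑ i ∈ Icc 1 n, ((X : K) ^ i - 1)⁻¹ * L (n - i)
          = ∑ i ∈ Icc 1 n, ((X : K) ^ i - 1)⁻¹ * Rf (n - i) := by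
        apply Finset.sum_congr rfl
        intro i hi
        rw [mem_Icc] at hi
        rw [ih (n - i) (by omega)]
      have hn0 : (n : K) ≠ 0 := Nat.cast_ne_zero.mpr (by omega)
      apply mul_left_cancel₀ hn0
      rw [hL, hR, hsum]



open RatFunc in
theorem cayley_formula_variant (n : ℕ) (hn : 0 < n) :
    ∑ P : Nat.Partition n, ∏ i ∈ Finset.Icc 1 n,
        (1 : RatFunc ℚ) /
          (((P.parts.count i).factorial : RatFunc ℚ) *
            ((i : RatFunc ℚ) * (RatFunc.X ^ i - 1)) ^ (P.parts.count i)) =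
      RatFunc.X ^ (n * (n - 1) / 2) / ∏ i ∈ Finset.Icc 1 n, (RatFunc.X ^ i - 1) := by
  have := L_eq_Rf n
  rw [L, Rf] at this
  exact this
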